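/- arXiv:2006.13000 — 4 statements merged into one kernel-verified Lean document; each statement's English description precedes it below -/
import Mathlib

section
/- Let c > 0, m > 0, V > 0, ε > 0, t > 0, and let g, h : [0,t] → ℝ be continuous. Suppose a, b : [0,t] → [0,∞) are continuous and satisfy, for all τ ∈ [0,t], a(τ) ≤ c·∫_τ^t b(σ) dσ + g(t−τ) and b(τ) ≤ c·((m+V²)·∫_τ^t a(σ) dσ + V·∫_τ^t b(σ) dσ) + h(t−τ); and suppose A, B : [0,t] → ℝ are continuous and satisfy, for all τ ∈ [0,t], the equalities A(τ) = c·∫_τ^t B(σ) dσ + g(t−τ) + ε and B(τ) = c·((m+V²)·∫_τ^t A(σ) dσ + V·∫_τ^t B(σ) dσ) + h(t−τ) + ε. Then a(τ) ≤ A(τ) and b(τ) ≤ B(τ) for all τ ∈ [0,t]. (Comparison principle: solutions of the ε-perturbed linear Volterra system dominate subsolutions.) -/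
open Set Filter Topology

lemma nonneg_of_pos_Ioc (t τ₀ : ℝ) (hτ0 : 0 ≤ τ₀) (hτt : τ₀ < t) (f : ℝ → ℝ)
    (hf : ContinuousOn f (Icc 0 t)) (hpos : ∀ σ ∈ Ioc τ₀ t, 0 < f σ) : 0 ≤ f τ₀ := by
  have hmem : τ₀ ∈ Icc (0:ℝ) t := ⟨hτ0, hτt.le⟩
  have hsub : Ioc τ₀ t ⊆ Icc 0 t := fun x hx => ⟨hτ0.trans hx.1.le, hx.2⟩
  have h2 : ContinuousWithinAt f (Ioc τ₀ t) τ₀ :=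
    (hf.continuousWithinAt hmem).mono hsub
  have h3 : Filter.Tendsto f (𝓝[>] τ₀) (𝓝 (f τ₀)) := by
    rw [← nhdsWithin_Ioc_eq_nhdsGT hτt]
    exact h2
  refine ge_of_tendsto h3 ?_
  filter_upwards [Ioc_mem_nhdsGT_of_mem ⟨le_rfl, hτt⟩] with σ hσ
  exact (hpos σ hσ).le

/-- **Comparison principle: solutions of the ε-perturbed linear Volterra system dominate
subsolutions.** -/
theorem volterra_comparison_principle
    (c m V ε t : ℝ) (hc : 0 < c) (hm : 0 < m) (hV : 0 < V) (hε : 0 < ε) (ht : 0 < t)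
    (g h a b A B : ℝ → ℝ)
    (hg : ContinuousOn g (Icc 0 t)) (hh : ContinuousOn h (Icc 0 t))
    (ha : ContinuousOn a (Icc 0 t)) (hb : ContinuousOn b (Icc 0 t))
    (ha0 : ∀ τ ∈ Icc (0:ℝ) t, 0 ≤ a τ) (hb0 : ∀ τ ∈ Icc (0:ℝ) t, 0 ≤ b τ)
    (hA : ContinuousOn A (Icc 0 t)) (hB : ContinuousOn B (Icc 0 t))
    (hasub : ∀ τ ∈ Icc (0:ℝ) t, a τ ≤ c * (∫ σ in τ..t, b σ) + g (t - τ))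
    (hbsub : ∀ τ ∈ Icc (0:ℝ) t,
      b τ ≤ c * ((m + V ^ 2) * (∫ σ in τ..t, a σ) + V * (∫ σ in τ..t, b σ)) + h (t - τ))
    (hAeq : ∀ τ ∈ Icc (0:ℝ) t, A τ = c * (∫ σ in τ..t, B σ) + g (t - τ) + ε)
    (hBeq : ∀ τ ∈ Icc (0:ℝ) t,
      B τ = c * ((m + V ^ 2) * (∫ σ in τ..t, A σ) + V * (∫ σ in τ..t, B σ)) + h (t - τ) + ε) :
    ∀ τ ∈ Icc (0:ℝ) t, a τ ≤ A τ ∧ b τ ≤ B τ := by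
  -- the "bad" set
  set S : Set ℝ := {τ ∈ Icc (0:ℝ) t | A τ ≤ a τ ∨ B τ ≤ b τ} with hS
  suffices hgood : ∀ τ ∈ Icc (0:ℝ) t, τ ∉ S by
    intro τ hτ
    have := hgood τ hτ
    simp only [hS, mem_setOf_eq, hτ, true_and, not_or, not_le] at this
    exact ⟨this.1.le, this.2.le⟩
  by_contra hbad
  push_neg at hbad
  obtain ⟨τ₁, hτ₁, hτ₁S⟩ := hbad
  -- S is compact and nonempty
  have hSclosed : IsClosed S := by
    have h1 : IsClosed (Icc (0:ℝ) t ∩ (fun x => A x - a x) ⁻¹' Iic 0) :=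
      (hA.sub ha).preimage_isClosed_of_isClosed isClosed_Icc isClosed_Iic
    have h2 : IsClosed (Icc (0:ℝ) t ∩ (fun x => B x - b x) ⁻¹' Iic 0) :=
      (hB.sub hb).preimage_isClosed_of_isClosed isClosed_Icc isClosed_Iic
    have : S = (Icc (0:ℝ) t ∩ (fun x => A x - a x) ⁻¹' Iic 0) ∪
        (Icc (0:ℝ) t ∩ (fun x => B x - b x) ⁻¹' Iic 0) := by
      ext x; simp [hS, and_or_left, sub_nonpos]
    rw [this]
    exact h1.union h2
  have hScomp : IsCompact S :=
    isCompact_Icc.of_isClosed_subset hSclosed (fun x hx => hx.1)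
  have hSne : S.Nonempty := ⟨τ₁, hτ₁S⟩
  set τ₀ : ℝ := sSup S with hτ₀def
  have hτ₀S : τ₀ ∈ S := hScomp.sSup_mem hSne
  have hτ₀mem : τ₀ ∈ Icc (0:ℝ) t := hτ₀S.1
  -- integrability helper
  have hint : ∀ (f : ℝ → ℝ), ContinuousOn f (Icc 0 t) → ∀ τ ∈ Icc (0:ℝ) t,
      IntervalIntegrable f MeasureTheory.volume τ t := by
    intro f hf τ hτ
    apply ContinuousOn.intervalIntegrable
    apply hf.mono
    rw [uIcc_of_le hτ.2]
    exact Icc_subset_Icc hτ.1 le_rfl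
  -- t is not bad
  have htgood : t ∉ S := by
    have hAt := hAeq t ⟨ht.le, le_rfl⟩
    have hBt := hBeq t ⟨ht.le, le_rfl⟩
    have hat := hasub t ⟨ht.le, le_rfl⟩
    have hbt := hbsub t ⟨ht.le, le_rfl⟩
    simp only [intervalIntegral.integral_same, mul_zero, zero_add, sub_self, add_zero,
      mul_zero] at hAt hBt hat hbt
    intro hcon
    rcases hcon.2 with hca | hcb
    · nlinarith
    · nlinarith
  have hτ₀t : τ₀ < t := lt_of_le_of_ne hτ₀mem.2 (fun he => htgood (he ▸ hτ₀S))
  -- strictly good on (τ₀, t]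
  have hIoc : ∀ σ ∈ Ioc τ₀ t, a σ < A σ ∧ b σ < B σ := by
    intro σ hσ
    have hσIcc : σ ∈ Icc (0:ℝ) t := ⟨hτ₀mem.1.trans hσ.1.le, hσ.2⟩
    have hσnS : σ ∉ S := fun hin => absurd (le_csSup hScomp.bddAbove hin) (not_le_of_gt hσ.1)
    simp only [hS, mem_setOf_eq, hσIcc, true_and, not_or, not_le] at hσnS
    exact ⟨hσnS.1, hσnS.2⟩
  -- nonnegativity at τ₀
  have hAa0 : 0 ≤ A τ₀ - a τ₀ :=
    nonneg_of_pos_Ioc t τ₀ hτ₀mem.1 hτ₀t (fun σ => A σ - a σ) (hA.sub ha)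
      (fun σ hσ => sub_pos.mpr (hIoc σ hσ).1)
  have hBb0 : 0 ≤ B τ₀ - b τ₀ :=
    nonneg_of_pos_Ioc t τ₀ hτ₀mem.1 hτ₀t (fun σ => B σ - b σ) (hB.sub hb)
      (fun σ hσ => sub_pos.mpr (hIoc σ hσ).2)
  -- pointwise comparison on [τ₀, t]
  have hle1 : ∀ σ ∈ Icc τ₀ t, a σ ≤ A σ := by
    intro σ hσ
    rcases eq_or_lt_of_le hσ.1 with he | hlt
    · rw [← he]; linarith
    · exact (hIoc σ ⟨hlt, hσ.2⟩).1.le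
  have hle2 : ∀ σ ∈ Icc τ₀ t, b σ ≤ B σ := by
    intro σ hσ
    rcases eq_or_lt_of_le hσ.1 with he | hlt
    · rw [← he]; linarith
    · exact (hIoc σ ⟨hlt, hσ.2⟩).2.le
  -- integral comparison
  have hIab : (∫ σ in τ₀..t, a σ) ≤ ∫ σ in τ₀..t, A σ :=
    intervalIntegral.integral_mono_on hτ₀t.le (hint a ha τ₀ hτ₀mem)
      (hint A hA τ₀ hτ₀mem) hle1
  have hIbB : (∫ σ in τ₀..t, b σ) ≤ ∫ σ in τ₀..t, B σ :=
    intervalIntegral.integral_mono_on hτ₀t.le (hint b hb τ₀ hτ₀mem)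
      (hint B hB τ₀ hτ₀mem) hle2
  -- contradiction at τ₀
  have hA' := hAeq τ₀ hτ₀mem
  have hB' := hBeq τ₀ hτ₀mem
  have ha' := hasub τ₀ hτ₀mem
  have hb' := hbsub τ₀ hτ₀mem
  have hmV : 0 < m + V ^ 2 := by positivity
  rcases hτ₀S.2 with hca | hcb
  · nlinarith [mul_nonneg hc.le (sub_nonneg.mpr hIbB)]
  · nlinarith [mul_nonneg (mul_nonneg hc.le hmV.le) (sub_nonneg.mpr hIab),
      mul_nonneg (mul_nonneg hc.le hV.le) (sub_nonneg.mpr hIbB)]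
end

section
/- Let C > 0 and C' > 0. Then for every ϖ ≥ 2C, all u, v ∈ ℝ³, and all real 0 ≤ s ≤ t: −ϖ⟨v⟩t + ϖ⟨u⟩s + C|v|(t−s) − C'|v−u|² ≤ −(ϖ/2)⟨v⟩(t−s) − (C'/2)|v−u|² + (ϖ²/(2C'))·s². Equivalently, e^{−ϖ⟨v⟩t}·e^{ϖ⟨u⟩s}·e^{C|v|(t−s)}·e^{−C'|v−u|²} ≤ e^{−(ϖ/2)⟨v⟩(t−s)}·e^{(ϖ²/(2C'))s²}·e^{−(C'/2)|v−u|²}. -/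
/-- **Exponent-comparison inequality** used to absorb the exponential growth factors along the
characteristics: for `ϖ ≥ 2C`, with `⟨v⟩ = √(1+|v|²)`,
`−ϖ⟨v⟩t + ϖ⟨u⟩s + C|v|(t−s) − C′|v−u|² ≤ −(ϖ/2)⟨v⟩(t−s) − (C′/2)|v−u|² + (ϖ²/(2C′))s²`,
equivalently the corresponding inequality between products of exponentials. -/
theorem exponent_comparison (C C' : ℝ) (hC : 0 < C) (hC' : 0 < C') :
    ∀ ϖ : ℝ, 2 * C ≤ ϖ → ∀ u v : EuclideanSpace ℝ (Fin 3), ∀ s t : ℝ, 0 ≤ s → s ≤ t →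
      (-(ϖ * Real.sqrt (1 + ‖v‖ ^ 2) * t) + ϖ * Real.sqrt (1 + ‖u‖ ^ 2) * s
          + C * ‖v‖ * (t - s) - C' * ‖v - u‖ ^ 2
        ≤ -(ϖ / 2) * Real.sqrt (1 + ‖v‖ ^ 2) * (t - s) - (C' / 2) * ‖v - u‖ ^ 2
          + (ϖ ^ 2 / (2 * C')) * s ^ 2) ∧
      (Real.exp (-(ϖ * Real.sqrt (1 + ‖v‖ ^ 2) * t)) * Real.exp (ϖ * Real.sqrt (1 + ‖u‖ ^ 2) * s)
          * Real.exp (C * ‖v‖ * (t - s)) * Real.exp (-(C' * ‖v - u‖ ^ 2))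
        ≤ Real.exp (-(ϖ / 2) * Real.sqrt (1 + ‖v‖ ^ 2) * (t - s))
          * Real.exp ((ϖ ^ 2 / (2 * C')) * s ^ 2)
          * Real.exp (-(C' / 2) * ‖v - u‖ ^ 2)) := by
  intro ϖ hϖ u v s t hs hst
  set a : ℝ := ‖v‖ with ha_def
  set b : ℝ := ‖u‖ with hb_def
  set d : ℝ := ‖v - u‖ with hd_def
  set A : ℝ := Real.sqrt (1 + a ^ 2) with hA_def
  set B : ℝ := Real.sqrt (1 + b ^ 2) with hB_def
  have hϖ0 : 0 < ϖ := lt_of_lt_of_le (by linarith) hϖ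
  have ha : 0 ≤ a := norm_nonneg _
  have hb : 0 ≤ b := norm_nonneg _
  have hd : 0 ≤ d := norm_nonneg _
  have hA2 : A ^ 2 = 1 + a ^ 2 := Real.sq_sqrt (by positivity)
  have hB2 : B ^ 2 = 1 + b ^ 2 := Real.sq_sqrt (by positivity)
  have hA0 : 0 ≤ A := Real.sqrt_nonneg _
  have hB0 : 0 ≤ B := Real.sqrt_nonneg _
  have haA : a ≤ A := by nlinarith
  have htri : b ≤ a + d := by
    have h1 : ‖u‖ - ‖v‖ ≤ ‖u - v‖ := norm_sub_norm_le u v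
    have h2 : ‖u - v‖ = ‖v - u‖ := norm_sub_rev u v
    simp only [ha_def, hb_def, hd_def] at *
    linarith
  have hBA : B ≤ A + d := by nlinarith
  have key : -(ϖ * A * t) + ϖ * B * s + C * a * (t - s) - C' * d ^ 2
      ≤ -(ϖ / 2) * A * (t - s) - (C' / 2) * d ^ 2 + (ϖ ^ 2 / (2 * C')) * s ^ 2 := by
    have h1 : C * a * (t - s) ≤ (ϖ / 2) * A * (t - s) := by
      apply mul_le_mul_of_nonneg_right _ (by linarith)
      nlinarith
    have h2 : ϖ * B * s ≤ ϖ * A * s + ϖ * d * s := by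
      have := mul_le_mul_of_nonneg_right (mul_le_mul_of_nonneg_left hBA hϖ0.le) hs
      nlinarith [this]
    have h3 : ϖ * d * s ≤ (C' / 2) * d ^ 2 + ϖ ^ 2 / (2 * C') * s ^ 2 := by
      have h2C' : (0:ℝ) < 2 * C' := by linarith
      have hq : 0 ≤ (C' * d - ϖ * s) ^ 2 / (2 * C') :=
        div_nonneg (sq_nonneg _) (le_of_lt h2C')
      have e : (C' * d - ϖ * s) ^ 2 / (2 * C')
          = (C' / 2) * d ^ 2 - ϖ * d * s + ϖ ^ 2 / (2 * C') * s ^ 2 := by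
        field_simp
        ring
      linarith [e ▸ hq]
    nlinarith [h1, h2, h3]
  refine ⟨key, ?_⟩
  rw [← Real.exp_add, ← Real.exp_add, ← Real.exp_add, ← Real.exp_add, ← Real.exp_add]
  exact Real.exp_le_exp.2 (by linarith)
end

section
/- Let σ₁ < T be reals, c > 0, σ₂ ∈ (0, T − σ₁], and set η = (c/10)·σ₂². Let φ : [σ₁, T] → ℝ be twice continuously differentiable with φ(s) ≤ 0 for all s ∈ [σ₁,T], φ(T) = 0, −φ(σ₁) > η, and such that φ''(s) ≥ c/2 for every s ∈ [σ₁,T] with −φ(s) ≤ η. Then −φ(s) > η for all s ∈ [σ₁, T − σ₂]. (Barrier lemma: under the field's convexifying effect near the boundary, the normal coordinate of a trajectory stays quantitatively away from the boundary except near the final bounce time.) -/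
open Set Filter Topology

lemma mono_aux {σ₁ T a b : ℝ} (hsub : Icc a b ⊆ Icc σ₁ T) {f f' : ℝ → ℝ}
    (hd : ∀ s ∈ Icc σ₁ T, HasDerivWithinAt f (f' s) (Icc σ₁ T) s)
    (hpos : ∀ s ∈ Icc a b, 0 ≤ f' s) : MonotoneOn f (Icc a b) :=
  monotoneOn_of_hasDerivWithinAt_nonneg (convex_Icc a b)
    (fun s hs => ((hd s (hsub hs)).continuousWithinAt).mono hsub)
    (fun x hx => ((hd x (hsub (interior_subset hx))).mono
      ((interior_subset.trans hsub))))
    (fun x hx => hpos x (interior_subset hx))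


/-- **Barrier lemma:** under the field's convexifying effect near the boundary (`φ'' ≥ c/2`
whenever `−φ ≤ η := (c/10)σ₂²`), the normal coordinate `−φ` of a trajectory with `φ ≤ 0`,
`φ(T) = 0` and `−φ(σ₁) > η` stays quantitatively away from the boundary, `−φ > η`, on all of
`[σ₁, T−σ₂]`. -/
theorem barrier_lemma
    (σ₁ T c σ₂ : ℝ) (hσ₁T : σ₁ < T) (hc : 0 < c) (hσ₂0 : 0 < σ₂) (hσ₂ : σ₂ ≤ T - σ₁)
    (φ φ' φ'' : ℝ → ℝ)
    (hd1 : ∀ s ∈ Icc σ₁ T, HasDerivWithinAt φ (φ' s) (Icc σ₁ T) s)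
    (hd2 : ∀ s ∈ Icc σ₁ T, HasDerivWithinAt φ' (φ'' s) (Icc σ₁ T) s)
    (hcont : ContinuousOn φ'' (Icc σ₁ T))
    (hnonpos : ∀ s ∈ Icc σ₁ T, φ s ≤ 0)
    (hT : φ T = 0)
    (hinit : (c / 10) * σ₂ ^ 2 < -φ σ₁)
    (hconvex : ∀ s ∈ Icc σ₁ T, -φ s ≤ (c / 10) * σ₂ ^ 2 → c / 2 ≤ φ'' s) :
    ∀ s ∈ Icc σ₁ (T - σ₂), (c / 10) * σ₂ ^ 2 < -φ s := by
  set η := (c / 10) * σ₂ ^ 2 with hηdef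
  have hη : 0 < η := by positivity
  by_contra hcon
  push_neg at hcon
  obtain ⟨s₀, hs₀, hbad⟩ := hcon
  have hs₀T : s₀ ∈ Icc σ₁ T := ⟨hs₀.1, hs₀.2.trans (by linarith)⟩
  have hcontφ : ContinuousOn φ (Icc σ₁ T) := fun s hs => (hd1 s hs).continuousWithinAt
  have hcontφ' : ContinuousOn φ' (Icc σ₁ T) := fun s hs => (hd2 s hs).continuousWithinAt
  set S : Set ℝ := Icc σ₁ T ∩ φ ⁻¹' (Ici (-η)) with hSdef
  have hSclosed : IsClosed S :=
    hcontφ.preimage_isClosed_of_isClosed isClosed_Icc isClosed_Ici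
  have hSne : S.Nonempty := ⟨s₀, hs₀T, by simpa using by linarith⟩
  have hSbdd : BddBelow S := ⟨σ₁, fun x hx => hx.1.1⟩
  set s₁ := sInf S with hs₁def
  have hs₁S : s₁ ∈ S := hSclosed.csInf_mem hSne hSbdd
  have hs₁Icc : s₁ ∈ Icc σ₁ T := hs₁S.1
  have hφs₁ : -η ≤ φ s₁ := hs₁S.2
  have hs₁le : s₁ ≤ s₀ := csInf_le hSbdd ⟨hs₀T, by simpa using by linarith⟩
  have hs₁T : s₁ ≤ T - σ₂ := hs₁le.trans hs₀.2
  have hσ₁s₁ : σ₁ < s₁ := by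
    rcases eq_or_lt_of_le hs₁Icc.1 with h | h
    · exfalso; rw [← h] at hφs₁; simp only [hηdef] at hφs₁; linarith [hinit]
    · exact h
  have hbefore : ∀ u ∈ Ico σ₁ s₁, φ u < -η := by
    intro u hu
    by_contra h
    push_neg at h
    exact absurd (csInf_le hSbdd ⟨⟨hu.1, hu.2.le.trans hs₁Icc.2⟩, h⟩) (not_le.2 hu.2)
  have hφ's₁ : 0 ≤ φ' s₁ := by
    have hder : HasDerivWithinAt φ (φ' s₁) (Icc σ₁ s₁) s₁ :=
      (hd1 s₁ hs₁Icc).mono (Icc_subset_Icc le_rfl hs₁Icc.2)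
    have hslope := hasDerivWithinAt_iff_tendsto_slope.1 hder
    rw [Icc_sdiff_right] at hslope
    haveI hNB : (𝓝[Ico σ₁ s₁] s₁).NeBot := right_nhdsWithin_Ico_neBot hσ₁s₁
    refine ge_of_tendsto hslope ?_
    filter_upwards [self_mem_nhdsWithin] with u hu
    have h1 : φ u < -η := hbefore u hu
    have h2 : u < s₁ := hu.2
    rw [slope_def_field]
    have hnum : φ u - φ s₁ ≤ 0 := by linarith
    have hden : u - s₁ < 0 := by linarith
    rw [div_nonneg_iff]
    exact Or.inr ⟨hnum, hden.le⟩
  set A : Set ℝ := {t ∈ Icc s₁ T | ∀ u ∈ Icc s₁ t, -η ≤ φ u ∧ 0 ≤ φ' u} with hAdef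
  have hs₁A : s₁ ∈ A := by
    refine ⟨⟨le_rfl, hs₁Icc.2⟩, fun u hu => ?_⟩
    have : u = s₁ := le_antisymm hu.2 hu.1
    rw [this]; exact ⟨hφs₁, hφ's₁⟩
  have hAne : A.Nonempty := ⟨s₁, hs₁A⟩
  have hAbdd : BddAbove A := ⟨T, fun x hx => hx.1.2⟩
  set t₁ := sSup A with ht₁def
  have hs₁t₁ : s₁ ≤ t₁ := le_csSup hAbdd hs₁A
  have ht₁T : t₁ ≤ T := csSup_le hAne fun x hx => hx.1.2
  have ht₁Icc : t₁ ∈ Icc σ₁ T := ⟨hs₁Icc.1.trans hs₁t₁, ht₁T⟩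
  have hgood : ∀ u, s₁ ≤ u → u < t₁ → -η ≤ φ u ∧ 0 ≤ φ' u := by
    intro u hu1 hu2
    obtain ⟨t, htA, hut⟩ := exists_lt_of_lt_csSup hAne hu2
    exact htA.2 u ⟨hu1, hut.le⟩
  have hclosure : -η ≤ φ t₁ ∧ 0 ≤ φ' t₁ := by
    rcases eq_or_lt_of_le hs₁t₁ with he | hlt
    · rw [← he]; exact ⟨hφs₁, hφ's₁⟩
    · haveI hNB : (𝓝[Ico s₁ t₁] t₁).NeBot := right_nhdsWithin_Ico_neBot hlt
      have hsub : Ico s₁ t₁ ⊆ Icc σ₁ T := fun x hx =>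
        ⟨hs₁Icc.1.trans hx.1, hx.2.le.trans ht₁T⟩
      constructor
      · refine ge_of_tendsto (((hcontφ t₁ ht₁Icc).mono hsub).tendsto) ?_
        filter_upwards [self_mem_nhdsWithin] with x hx
        exact (hgood x hx.1 hx.2).1
      · refine ge_of_tendsto (((hcontφ' t₁ ht₁Icc).mono hsub).tendsto) ?_
        filter_upwards [self_mem_nhdsWithin] with x hx
        exact (hgood x hx.1 hx.2).2
  have ht₁A : t₁ ∈ A := by
    refine ⟨⟨hs₁t₁, ht₁T⟩, fun u hu => ?_⟩
    rcases lt_or_eq_of_le hu.2 with h | h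
    · exact hgood u hu.1 h
    · rw [h]; exact hclosure
  have ht₁eq : t₁ = T := by
    by_contra hne
    have ht₁ltT : t₁ < T := lt_of_le_of_ne ht₁T hne
    have hφ''t₁ : c / 2 ≤ φ'' t₁ := hconvex t₁ ht₁Icc (by linarith [hclosure.1])
    have hev : ∀ᶠ x in 𝓝[Icc σ₁ T] t₁, 0 < φ'' x :=
      (hcont t₁ ht₁Icc).eventually (eventually_gt_nhds (by linarith))
    obtain ⟨δ, hδ0, hδ⟩ := Metric.mem_nhdsWithin_iff.1 hev
    set b := min (t₁ + δ / 2) T with hbdef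
    have ht₁b : t₁ < b := lt_min (by linarith) ht₁ltT
    have hbT : b ≤ T := min_le_right _ _
    have hsubb : Icc t₁ b ⊆ Icc σ₁ T := fun x hx =>
      ⟨ht₁Icc.1.trans hx.1, hx.2.trans hbT⟩
    have hppos : ∀ x ∈ Icc t₁ b, 0 ≤ φ'' x := by
      intro x hx
      refine le_of_lt (hδ ⟨?_, hsubb hx⟩)
      rw [Metric.mem_ball, Real.dist_eq, abs_of_nonneg (by linarith [hx.1])]
      have : x ≤ t₁ + δ / 2 := hx.2.trans (min_le_left _ _)
      linarith
    have hmono' : MonotoneOn φ' (Icc t₁ b) := mono_aux hsubb hd2 hppos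
    have hφ'nn : ∀ x ∈ Icc t₁ b, 0 ≤ φ' x := fun x hx =>
      hclosure.2.trans (hmono' ⟨le_rfl, ht₁b.le⟩ hx hx.1)
    have hmono : MonotoneOn φ (Icc t₁ b) := mono_aux hsubb hd1 hφ'nn
    have hφnn : ∀ x ∈ Icc t₁ b, -η ≤ φ x := fun x hx =>
      hclosure.1.trans (hmono ⟨le_rfl, ht₁b.le⟩ hx hx.1)
    have hbA : b ∈ A := by
      refine ⟨⟨hs₁t₁.trans ht₁b.le, hbT⟩, fun u hu => ?_⟩
      rcases le_or_gt u t₁ with h | h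
      · exact ht₁A.2 u ⟨hu.1, h⟩
      · exact ⟨hφnn u ⟨h.le, hu.2⟩, hφ'nn u ⟨h.le, hu.2⟩⟩
    exact absurd (le_csSup hAbdd hbA) (not_le.2 ht₁b)
  have hglob : ∀ u ∈ Icc s₁ T, -η ≤ φ u ∧ 0 ≤ φ' u := by
    intro u hu; exact ht₁A.2 u ⟨hu.1, hu.2.trans_eq ht₁eq.symm⟩
  have hsub1 : Icc s₁ T ⊆ Icc σ₁ T := Icc_subset_Icc hs₁Icc.1 le_rfl
  have hφ''ge : ∀ u ∈ Icc s₁ T, c / 2 ≤ φ'' u := fun u hu =>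
    hconvex u (hsub1 hu) (by linarith [(hglob u hu).1])
  have hd2' : ∀ s ∈ Icc σ₁ T,
      HasDerivWithinAt (fun u => φ' u - c / 2 * (u - s₁)) (φ'' s - c / 2) (Icc σ₁ T) s := by
    intro s hs
    have h1 : HasDerivWithinAt (fun u => c / 2 * (u - s₁)) (c / 2) (Icc σ₁ T) s := by
      have := (((hasDerivAt_id s).sub_const s₁).const_mul (c / 2)).hasDerivWithinAt
        (s := Icc σ₁ T)
      simpa using this
    exact (hd2 s hs).sub h1
  have hmono2 : MonotoneOn (fun u => φ' u - c / 2 * (u - s₁)) (Icc s₁ T) :=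
    mono_aux hsub1 hd2' (fun x hx => by linarith [hφ''ge x hx])
  have hφ'lower : ∀ u ∈ Icc s₁ T, c / 2 * (u - s₁) ≤ φ' u := by
    intro u hu
    have := hmono2 ⟨le_rfl, hs₁Icc.2⟩ hu hu.1
    simp only [sub_self, mul_zero, sub_zero] at this
    linarith [hφ's₁]
  have hd1' : ∀ s ∈ Icc σ₁ T,
      HasDerivWithinAt (fun u => φ u - c / 4 * (u - s₁) ^ 2)
        (φ' s - c / 2 * (s - s₁)) (Icc σ₁ T) s := by
    intro s hs
    have h1 : HasDerivWithinAt (fun u => c / 4 * (u - s₁) ^ 2)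
        (c / 2 * (s - s₁)) (Icc σ₁ T) s := by
      have := ((((hasDerivAt_id s).sub_const s₁).pow 2).const_mul (c / 4)).hasDerivWithinAt
        (s := Icc σ₁ T)
      refine this.congr_deriv ?_
      simp only [id_eq]
      push_cast
      ring
    exact (hd1 s hs).sub h1
  have hmono3 : MonotoneOn (fun u => φ u - c / 4 * (u - s₁) ^ 2) (Icc s₁ T) :=
    mono_aux hsub1 hd1' (fun x hx => by linarith [hφ'lower x hx])
  have hfinal := hmono3 ⟨le_rfl, hs₁Icc.2⟩ ⟨hs₁Icc.2, le_rfl⟩ hs₁Icc.2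
  simp only [sub_self, mul_zero, sub_zero, hT] at hfinal
  have hTs₁ : σ₂ ≤ T - s₁ := by linarith
  have hsq : σ₂ ^ 2 ≤ (T - s₁) ^ 2 := by nlinarith
  simp only [hηdef] at hφs₁
  nlinarith [hφs₁]
end

section
/- Let ξ : ℝ³ → ℝ be twice continuously differentiable, let E : ℝ × ℝ³ → ℝ³ be continuous, let a < b be reals, and let (X,V) : [a,b] → ℝ³ × ℝ³ be continuously differentiable with X'(s) = V(s) and V'(s) = E(s, X(s)) for all s ∈ [a,b]. If ξ(X(a)) = ξ(X(b)) = 0, then |V(b) · ∇ξ(X(b))| ≤ ((b−a)/2) · sup_{s ∈ [a,b]} |V(s) · (∇²ξ(X(s)) V(s)) + E(s,X(s)) · ∇ξ(X(s))|, and the same bound holds for |V(a) · ∇ξ(X(a))|. (Time–angle relation: the normal component of the velocity at a bounce is controlled by the duration of the bounce interval times the maximal normal acceleration.) -/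
open Set intervalIntegral MeasureTheory
open scoped RealInnerProductSpace

lemma aux_bound (f g g' : ℝ → ℝ) (a b K : ℝ) (hab : a < b)
    (hf : ∀ s ∈ Icc a b, HasDerivWithinAt f (g s) (Icc a b) s)
    (hg : ∀ s ∈ Icc a b, HasDerivWithinAt g (g' s) (Icc a b) s)
    (hK : ∀ s ∈ Icc a b, |g' s| ≤ K)
    (h0 : f b = f a) :
    |g b| ≤ (b - a) / 2 * K ∧ |g a| ≤ (b - a) / 2 * K := by
  have hab' : a ≤ b := hab.le
  have haI : a ∈ Icc a b := ⟨le_refl a, hab'⟩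
  have hbI : b ∈ Icc a b := ⟨hab', le_refl b⟩
  have hlip : ∀ x ∈ Icc a b, ∀ y ∈ Icc a b, |g y - g x| ≤ K * |y - x| := by
    intro x hx y hy
    simpa [Real.norm_eq_abs] using
      (convex_Icc a b).norm_image_sub_le_of_norm_hasDerivWithin_le hg
        (fun s hs => by simpa [Real.norm_eq_abs] using hK s hs) hx hy
  have hgcont : ContinuousOn g (Icc a b) := fun s hs => (hg s hs).continuousWithinAt
  have hgint : IntervalIntegrable g volume a b :=
    (hgcont.mono (by rw [uIcc_of_le hab'])).intervalIntegrable
  have hftc : ∫ s in a..b, g s = f b - f a := by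
    apply integral_eq_sub_of_hasDeriv_right_of_le hab'
      (fun s hs => (hf s hs).continuousWithinAt)
      (fun s hs => ((hf s (Ioo_subset_Icc_self hs)).hasDerivAt
        (Icc_mem_nhds hs.1 hs.2)).hasDerivWithinAt) hgint
  have hz : ∫ s in a..b, g s = 0 := by rw [hftc, h0]; ring
  constructor
  · -- bound at b
    have h1 : ∫ s in a..b, (g b - g s) = g b * (b - a) := by
      rw [integral_sub intervalIntegrable_const hgint, intervalIntegral.integral_const, hz]
      simp only [smul_eq_mul]; ring
    have h2 : |∫ s in a..b, (g b - g s)| ≤ ∫ s in a..b, K * (b - s) := by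
      calc |∫ s in a..b, (g b - g s)| ≤ ∫ s in a..b, |g b - g s| := by
            exact abs_integral_le_integral_abs hab'
        _ ≤ ∫ s in a..b, K * (b - s) := by
            apply integral_mono_on hab'
            · exact (intervalIntegrable_const.sub hgint).abs
            · exact (intervalIntegrable_const.sub intervalIntegrable_id).const_mul K
            · intro s hs
              have := hlip s hs b hbI
              rwa [abs_of_nonneg (by linarith [hs.2] : (0:ℝ) ≤ b - s)] at this
    have h3 : ∫ s in a..b, K * (b - s) = K * ((b - a) ^ 2 / 2) := by
      rw [intervalIntegral.integral_const_mul, integral_sub intervalIntegrable_const intervalIntegrable_id,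
        intervalIntegral.integral_const, integral_id]
      simp only [smul_eq_mul]; ring
    have h4 : |g b| * (b - a) ≤ K * ((b - a) ^ 2 / 2) := by
      calc |g b| * (b - a) = |g b * (b - a)| := by
            rw [abs_mul, abs_of_nonneg (by linarith : (0:ℝ) ≤ b - a)]
        _ = |∫ s in a..b, (g b - g s)| := by rw [h1]
        _ ≤ K * ((b - a) ^ 2 / 2) := h2.trans_eq h3
    have hba : (0:ℝ) < b - a := by linarith
    rw [div_mul_eq_mul_div, le_div_iff₀ (by norm_num : (0:ℝ) < 2)]
    nlinarith [h4]
  · -- bound at a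
    have h1 : ∫ s in a..b, (g s - g a) = -(g a * (b - a)) := by
      rw [integral_sub hgint intervalIntegrable_const, intervalIntegral.integral_const, hz]
      simp only [smul_eq_mul]; ring
    have h2 : |∫ s in a..b, (g s - g a)| ≤ ∫ s in a..b, K * (s - a) := by
      calc |∫ s in a..b, (g s - g a)| ≤ ∫ s in a..b, |g s - g a| := by
            exact abs_integral_le_integral_abs hab'
        _ ≤ ∫ s in a..b, K * (s - a) := by
            apply integral_mono_on hab'
            · exact (hgint.sub intervalIntegrable_const).abs
            · exact (intervalIntegrable_id.sub intervalIntegrable_const).const_mul K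
            · intro s hs
              have := hlip a haI s hs
              rwa [abs_of_nonneg (by linarith [hs.1] : (0:ℝ) ≤ s - a)] at this
    have h3 : ∫ s in a..b, K * (s - a) = K * ((b - a) ^ 2 / 2) := by
      rw [intervalIntegral.integral_const_mul, integral_sub intervalIntegrable_id intervalIntegrable_const,
        intervalIntegral.integral_const, integral_id]
      simp only [smul_eq_mul]; ring
    have h4 : |g a| * (b - a) ≤ K * ((b - a) ^ 2 / 2) := by
      calc |g a| * (b - a) = |-(g a * (b - a))| := by
            rw [abs_neg, abs_mul, abs_of_nonneg (by linarith : (0:ℝ) ≤ b - a)]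
        _ = |∫ s in a..b, (g s - g a)| := by rw [h1]
        _ ≤ K * ((b - a) ^ 2 / 2) := h2.trans_eq h3
    have hba : (0:ℝ) < b - a := by linarith
    rw [div_mul_eq_mul_div, le_div_iff₀ (by norm_num : (0:ℝ) < 2)]
    nlinarith [h4]

/-- **Time–angle relation:** for a characteristic trajectory `(X,V)` of a continuous field `E`
between two bounces (`ξ(X(a)) = ξ(X(b)) = 0`), the normal component of the velocity at either
bounce is controlled by the duration of the bounce interval times the maximal normal
acceleration `sup_{[a,b]} |V·(∇²ξ∘X)V + E·(∇ξ∘X)|`. -/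
theorem time_angle_relation
    (ξ : EuclideanSpace ℝ (Fin 3) → ℝ) (hξ : ContDiff ℝ 2 ξ)
    (E : ℝ → EuclideanSpace ℝ (Fin 3) → EuclideanSpace ℝ (Fin 3))
    (hE : Continuous (fun p : ℝ × EuclideanSpace ℝ (Fin 3) => E p.1 p.2))
    (a b : ℝ) (hab : a < b)
    (X V : ℝ → EuclideanSpace ℝ (Fin 3))
    (hX : ∀ s ∈ Icc a b, HasDerivWithinAt X (V s) (Icc a b) s)
    (hV : ∀ s ∈ Icc a b, HasDerivWithinAt V (E s (X s)) (Icc a b) s)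
    (ha0 : ξ (X a) = 0) (hb0 : ξ (X b) = 0) :
    ∀ K : ℝ,
      (∀ s ∈ Icc a b,
        |⟪V s, (fderiv ℝ (gradient ξ) (X s)) (V s)⟫ + ⟪E s (X s), gradient ξ (X s)⟫| ≤ K) →
      |⟪V b, gradient ξ (X b)⟫| ≤ ((b - a) / 2) * K ∧
      |⟪V a, gradient ξ (X a)⟫| ≤ ((b - a) / 2) * K := by
  intro K hK
  have hξ1 : Differentiable ℝ ξ := hξ.differentiable (by norm_num)
  have hG : ContDiff ℝ 1 (gradient ξ) := by
    have h1 : ContDiff ℝ 1 (fderiv ℝ ξ) := hξ.fderiv_right (by norm_num)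
    exact ((InnerProductSpace.toDual ℝ (EuclideanSpace ℝ (Fin 3))).symm.contDiff).comp h1
  have hG1 : Differentiable ℝ (gradient ξ) := hG.differentiable one_ne_zero
  -- derivative of f = ξ ∘ X
  have hf : ∀ s ∈ Icc a b,
      HasDerivWithinAt (fun t => ξ (X t)) ⟪V s, gradient ξ (X s)⟫ (Icc a b) s := by
    intro s hs
    have hd := (hξ1 (X s)).hasFDerivAt.comp_hasDerivWithinAt s (hX s hs)
    have : fderiv ℝ ξ (X s) (V s) = ⟪V s, gradient ξ (X s)⟫ := by
      rw [real_inner_comm, gradient, InnerProductSpace.toDual_symm_apply]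
    rwa [this] at hd
  -- derivative of g
  have hg : ∀ s ∈ Icc a b,
      HasDerivWithinAt (fun t => ⟪V t, gradient ξ (X t)⟫)
        (⟪V s, (fderiv ℝ (gradient ξ) (X s)) (V s)⟫ + ⟪E s (X s), gradient ξ (X s)⟫)
        (Icc a b) s := by
    intro s hs
    have hw : HasDerivWithinAt (fun t => gradient ξ (X t))
        ((fderiv ℝ (gradient ξ) (X s)) (V s)) (Icc a b) s :=
      (hG1 (X s)).hasFDerivAt.comp_hasDerivWithinAt s (hX s hs)
    exact (hV s hs).inner ℝ hw
  have := aux_bound (fun t => ξ (X t)) (fun t => ⟪V t, gradient ξ (X t)⟫)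
    (fun s => ⟪V s, (fderiv ℝ (gradient ξ) (X s)) (V s)⟫ + ⟪E s (X s), gradient ξ (X s)⟫)
    a b K hab hf hg hK (by show ξ (X b) = ξ (X a); rw [ha0, hb0])
  exact this
end
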